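/- Let n ≥ 1, q = 3^n, C_0 the nonzero squares of F_q, C_1 the nonsquares, t a positive integer, and α, β, θ ∈ F_q^*. Define f : F_q → F_q by f(0) = 0, f(x) = α·x^t for x ∈ C_0, and f(x) = β(x^3 + θx^2 + θ^2 x) for x ∈ C_1. Then f is a bijection of F_q if and only if: gcd(t, (q-1)/2) = 1, θ is a nonzero square in F_q, and (α is a nonzero square ↔ β is a nonzero square). -/

import Mathlib

open FiniteField

lemma sqcl {F : Type*} [Field F] [Fintype F] {a b : F} (ha : a ≠ 0) (hb : b ≠ 0) :
    IsSquare (a * b) ↔ (IsSquare a ↔ IsSquare b) := by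
  classical
  have hab : a * b ≠ 0 := mul_ne_zero ha hb
  rw [← quadraticChar_one_iff_isSquare hab, ← quadraticChar_one_iff_isSquare ha,
    ← quadraticChar_one_iff_isSquare hb, map_mul]
  rcases quadraticChar_dichotomy ha with h | h <;>
    rcases quadraticChar_dichotomy hb with h' | h' <;> rw [h, h'] <;> norm_num

theorem stmt_17 {F : Type*} [Field F] [Fintype F] (n : ℕ) (hn : 1 ≤ n)
    (hcard : Fintype.card F = 3 ^ n)
    (t : ℕ) (ht : 0 < t)
    (α β θ : F) (hα : α ≠ 0) (hβ : β ≠ 0) (hθ : θ ≠ 0)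
    (f : F → F)
    (hf0 : f 0 = 0)
    (hfs : ∀ x : F, x ≠ 0 → IsSquare x → f x = α * x ^ t)
    (hfn : ∀ x : F, x ≠ 0 → ¬ IsSquare x → f x = β * (x ^ 3 + θ * x ^ 2 + θ ^ 2 * x)) :
    Function.Bijective f ↔
      (Nat.gcd t ((3 ^ n - 1) / 2) = 1 ∧ IsSquare θ ∧ (IsSquare α ↔ IsSquare β)) := by
  classical
  -- the characteristic is 3
  have hp3 : ringChar F = 3 := by
    haveI := ringChar.charP F
    obtain ⟨m, hp, hc⟩ := FiniteField.card F (ringChar F)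
    have h1 : ringChar F ∣ 3 ^ n := by
      rw [← hcard, hc]; exact dvd_pow_self _ (by positivity)
    have h2 : ringChar F ∣ 3 := hp.dvd_of_dvd_pow h1
    exact (Nat.prime_dvd_prime_iff_eq hp (by norm_num)).mp h2
  have h3 : (3 : F) = 0 := by
    have := CharP.cast_eq_zero F (ringChar F)
    rw [hp3] at this; exact_mod_cast this
  set m : ℕ := (3 ^ n - 1) / 2 with hm
  have hq3 : 3 ≤ 3 ^ n := by
    calc 3 = 3 ^ 1 := by norm_num
    _ ≤ 3 ^ n := Nat.pow_le_pow_right (by norm_num) hn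
  have hodd : Odd (3 ^ n) := Odd.pow (by decide)
  have heven : Even (3 ^ n - 1) := Nat.Odd.sub_odd hodd odd_one
  have hm2 : 2 * m = 3 ^ n - 1 := Nat.mul_div_cancel' heven.two_dvd
  have hmpos : 0 < m := by omega
  -- squares to the m-th power are 1
  have pow_m : ∀ z : F, z ≠ 0 → IsSquare z → z ^ m = 1 := by
    intro z hz ⟨w, hw⟩
    have hw0 : w ≠ 0 := by rintro rfl; simp at hw; exact hz hw
    rw [hw, ← pow_two, ← pow_mul, hm2, ← hcard]
    exact FiniteField.pow_card_sub_one_eq_one w hw0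
  -- image classes
  have class_s : ∀ x : F, x ≠ 0 → IsSquare x → f x ≠ 0 ∧ (IsSquare (f x) ↔ IsSquare α) := by
    intro x hx hsx
    have hxt : x ^ t ≠ 0 := pow_ne_zero _ hx
    rw [hfs x hx hsx]
    refine ⟨mul_ne_zero hα hxt, ?_⟩
    rw [sqcl hα hxt]
    have : IsSquare (x ^ t) := hsx.pow _
    tauto
  have class_n : IsSquare θ → ∀ x : F, x ≠ 0 → ¬ IsSquare x →
      f x ≠ 0 ∧ (IsSquare (f x) ↔ ¬ IsSquare β) := by
    intro hθsq x hx hsx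
    have hxθ : x - θ ≠ 0 := by
      intro h
      exact hsx (by rw [sub_eq_zero.mp h]; exact hθsq)
    have hid : x ^ 3 + θ * x ^ 2 + θ ^ 2 * x = (β⁻¹ * β) * (x * (x - θ) ^ 2) := by
      rw [inv_mul_cancel₀ hβ, one_mul]
      linear_combination (θ * x ^ 2) * h3
    have hfx : f x = (β * x) * (x - θ) ^ 2 := by
      rw [hfn x hx hsx, hid, inv_mul_cancel₀ hβ, one_mul]; ring
    have hsq2 : (x - θ) ^ 2 ≠ 0 := pow_ne_zero _ hxθ
    have hsqsq : IsSquare ((x - θ) ^ 2) := ⟨x - θ, by ring⟩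
    rw [hfx]
    refine ⟨mul_ne_zero (mul_ne_zero hβ hx) hsq2, ?_⟩
    rw [sqcl (mul_ne_zero hβ hx) hsq2, sqcl hβ hx]
    tauto
  constructor
  · -- bijective → conditions
    intro hbij
    have hθsq : IsSquare θ := by
      by_contra hns
      have h1 : f θ = 0 := by
        rw [hfn θ hθ hns]
        have : θ ^ 3 + θ * θ ^ 2 + θ ^ 2 * θ = 0 := by linear_combination (θ ^ 3) * h3
        rw [this, mul_zero]
      exact hθ (hbij.injective (h1.trans hf0.symm))
    refine ⟨?_, hθsq, ?_⟩
    · -- gcd condition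
      by_contra hg
      obtain ⟨p, hp, hpd⟩ := Nat.exists_prime_and_dvd hg
      have hpt : p ∣ t := hpd.trans (Nat.gcd_dvd_left _ _)
      have hpm : p ∣ m := hpd.trans (Nat.gcd_dvd_right _ _)
      obtain ⟨g, hg'⟩ := IsCyclic.exists_generator (α := Fˣ)
      have hog : orderOf g = 2 * m := by
        rw [orderOf_eq_card_of_forall_mem_zpowers hg', Nat.card_eq_fintype_card,
          Fintype.card_units, hcard, hm2]
      set w : Fˣ := g ^ (m / p) with hw
      set z : Fˣ := w ^ 2 with hz
      have hmp_pos : 0 < m / p := Nat.div_pos (Nat.le_of_dvd hmpos hpm) hp.pos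
      have hzne : z ≠ 1 := by
        intro h
        have h' : g ^ (m / p * 2) = 1 := by rw [pow_mul]; exact h
        have hd : orderOf g ∣ m / p * 2 := orderOf_dvd_of_pow_eq_one h'
        rw [hog] at hd
        have hlt : (m / p) * 2 < 2 * m := by
          have : m / p < m := Nat.div_lt_self hmpos hp.one_lt
          omega
        have := Nat.le_of_dvd (by omega) hd
        omega
      have hzt : z ^ t = 1 := by
        obtain ⟨s, hs⟩ := hpt
        have hmp : m / p * p = m := Nat.div_mul_cancel hpm
        rw [hz, hw, ← pow_mul, ← pow_mul, ← orderOf_dvd_iff_pow_eq_one, hog]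
        refine ⟨s, ?_⟩
        rw [hs]
        calc m / p * (2 * (p * s)) = m / p * p * (2 * s) := by ring
          _ = 2 * m * s := by rw [hmp]; ring
      have hz0 : (z : F) ≠ 0 := Units.ne_zero z
      have hzsq : IsSquare (z : F) := ⟨(w : F), by rw [hz]; push_cast; ring⟩
      have hfz : f (z : F) = α := by
        rw [hfs _ hz0 hzsq]
        have : ((z : F)) ^ t = 1 := by
          have := congrArg (Units.val) hzt
          push_cast at this; exact this
        rw [this, mul_one]
      have hf1 : f 1 = α := by rw [hfs 1 one_ne_zero IsSquare.one, one_pow, mul_one]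
      have : (z : F) = (1 : F) := hbij.injective (hfz.trans hf1.symm)
      exact hzne (Units.ext this)
    · -- square class condition
      by_contra hab
      by_cases hA : IsSquare α <;> by_cases hB : IsSquare β
      · exact hab (iff_of_true hA hB)
      · -- everything in the image is a square; contradiction with a nonsquare
        obtain ⟨c, hc⟩ := FiniteField.exists_nonsquare (F := F) (by rw [hp3]; norm_num)
        obtain ⟨x, hx⟩ := hbij.surjective c
        rcases eq_or_ne x 0 with rfl | hx0
        · rw [hf0] at hx; exact hc (hx ▸ IsSquare.zero)
        · by_cases hsx : IsSquare x
          · exact hc (hx ▸ ((class_s x hx0 hsx).2.mpr hA))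
          · exact hc (hx ▸ ((class_n hθsq x hx0 hsx).2.mpr hB))
      · -- everything in the image is a nonsquare or zero; contradiction with 1
        obtain ⟨x, hx⟩ := hbij.surjective (1 : F)
        rcases eq_or_ne x 0 with rfl | hx0
        · rw [hf0] at hx; exact one_ne_zero hx.symm
        · by_cases hsx : IsSquare x
          · exact hA ((class_s x hx0 hsx).2.mp (hx ▸ IsSquare.one))
          · exact ((class_n hθsq x hx0 hsx).2.mp (hx ▸ IsSquare.one)) hB
      · exact hab (iff_of_false hA hB)
  · -- conditions → bijective
    rintro ⟨hgcd, hθsq, hab⟩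
    rw [Fintype.bijective_iff_injective_and_card]
    refine ⟨?_, rfl⟩
    intro x y hxy
    -- a point other than 0 has nonzero image
    have himg : ∀ u : F, u ≠ 0 → f u ≠ 0 := by
      intro u hu
      by_cases hsu : IsSquare u
      · exact (class_s u hu hsu).1
      · exact (class_n hθsq u hu hsu).1
    rcases eq_or_ne x 0 with rfl | hx0
    · rcases eq_or_ne y 0 with rfl | hy0
      · rfl
      · exact absurd (hxy.symm.trans hf0) (himg y hy0)
    · rcases eq_or_ne y 0 with rfl | hy0
      · exact absurd (hxy.trans hf0) (himg x hx0)
      · by_cases hsx : IsSquare x <;> by_cases hsy : IsSquare y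
        · -- both squares
          have h1 : α * x ^ t = α * y ^ t := by
            rw [← hfs x hx0 hsx, ← hfs y hy0 hsy]; exact hxy
          have h2 : x ^ t = y ^ t := mul_left_cancel₀ hα h1
          set z : F := x * y⁻¹ with hzdef
          have hz0 : z ≠ 0 := mul_ne_zero hx0 (inv_ne_zero hy0)
          have hzt : z ^ t = 1 := by
            rw [hzdef, mul_pow, inv_pow, h2, mul_inv_cancel₀ (pow_ne_zero _ hy0)]
          have hzsq : IsSquare z := by
            obtain ⟨u, hu⟩ := hsx
            obtain ⟨v, hv⟩ := hsy
            have hv0 : v ≠ 0 := by rintro rfl; simp at hv; exact hy0 hv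
            exact ⟨u * v⁻¹, by rw [hzdef, hu, hv]; field_simp⟩
          have hzm : z ^ m = 1 := pow_m z hz0 hzsq
          have hdvd : orderOf z ∣ 1 := by
            rw [← hgcd]
            exact Nat.dvd_gcd (orderOf_dvd_of_pow_eq_one hzt) (orderOf_dvd_of_pow_eq_one hzm)
          have : z = 1 := orderOf_eq_one_iff.mp (Nat.dvd_one.mp hdvd)
          rwa [hzdef, mul_inv_eq_one₀ hy0] at this
        · -- mixed: impossible
          have h1 := (class_s x hx0 hsx).2
          have h2 := (class_n hθsq y hy0 hsy).2
          rw [hxy] at h1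
          tauto
        · have h1 := (class_n hθsq x hx0 hsx).2
          have h2 := (class_s y hy0 hsy).2
          rw [hxy] at h1
          tauto
        · -- both nonsquares
          have hE : x ^ 3 + θ * x ^ 2 + θ ^ 2 * x = y ^ 3 + θ * y ^ 2 + θ ^ 2 * y := by
            have := hxy
            rw [hfn x hx0 hsx, hfn y hy0 hsy] at this
            exact mul_left_cancel₀ hβ this
          by_contra hne
          have hxyne : x - y ≠ 0 := sub_ne_zero.mpr hne
          have hfac : (x - y) * (x ^ 2 + x * y + y ^ 2 + θ * x + θ * y + θ ^ 2) = 0 := by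
            linear_combination hE
          have key : x ^ 2 + x * y + y ^ 2 + θ * x + θ * y + θ ^ 2 = 0 :=
            (mul_eq_zero.mp hfac).resolve_left hxyne
          have hsqx : θ * x = (x - y + θ) ^ 2 := by
            linear_combination (-1) * key + (y * (x + θ)) * h3
          obtain ⟨c, hc⟩ := hθsq
          have hc0 : c ≠ 0 := by rintro rfl; simp at hc; exact hθ hc
          have : IsSquare x := by
            refine ⟨c⁻¹ * (x - y + θ), ?_⟩
            have : (c * c) * x = (x - y + θ) ^ 2 := by rw [← hc]; exact hsqx
            field_simp
            linear_combination this
          exact hsx this
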